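/- Let p ≥ 3 be an integer and assume the polynomial t^p − t + 1 is irreducible over ℚ. Suppose M_1, …, M_{p-1}, L, R, S ∈ ℚ[[x]] satisfy: for every 1 ≤ i ≤ p−1, M_i − 1 = x·M_i M_{i+1}⋯M_{p-1} + x³·M_i M_{i+1}⋯M_{p-1}·(M_1⋯M_{i-1}M_i − 1); L − 1 = x·L·M; R = M_{p-1} + x²·(M·R − M_{p-1}); and S = L·(M_1⋯M_{p-2})·R, where M = M_1⋯M_{p-1}. Then S is not rational: there do not exist polynomials P, Q ∈ ℚ[x] with Q ≠ 0 and S·Q = P in ℚ[[x]]. -/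

import Mathlib

open PowerSeries
open scoped RatFunc

set_option maxHeartbeats 1600000 in
/-- Theorem 4.3: for `p ≥ 3` (granting the irreducibility of `t^p − t + 1`
over `ℚ`), the growth series `S` of positive elements of `F(p)` is
irrational: `S` is not a ratio of two polynomials. -/
theorem stmt12 (p : ℕ) (hp : 3 ≤ p)
    (hirr : Irreducible (Polynomial.X ^ p - Polynomial.X + 1 : Polynomial ℚ))
    (M : ℕ → PowerSeries ℚ) (L R S : PowerSeries ℚ)
    (hM : ∀ i, 1 ≤ i → i ≤ p - 1 →
      M i - 1 = X * (∏ j ∈ Finset.Icc i (p - 1), M j) +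
        X ^ 3 * (∏ j ∈ Finset.Icc i (p - 1), M j) *
          ((∏ j ∈ Finset.Icc 1 i, M j) - 1))
    (hL : L - 1 = X * L * ∏ j ∈ Finset.Icc 1 (p - 1), M j)
    (hR : R = M (p - 1) +
      X ^ 2 * ((∏ j ∈ Finset.Icc 1 (p - 1), M j) * R - M (p - 1)))
    (hS : S = L * (∏ j ∈ Finset.Icc 1 (p - 2), M j) * R) :
    ¬ ∃ (P Q : Polynomial ℚ), Q ≠ 0 ∧
        S * (Q : PowerSeries ℚ) = (P : PowerSeries ℚ) := by
  rintro ⟨P, Q, hQ, hPQ⟩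
  obtain ⟨q, rfl⟩ : ∃ q, p = q + 3 := ⟨p - 3, by omega⟩
  have e1 : q + 3 - 1 = q + 2 := rfl
  have e2 : q + 3 - 2 = q + 1 := rfl
  rw [e1] at hM hL hR
  rw [e2] at hS
  have prodsplit : ∀ a b c : ℕ, a ≤ b → b ≤ c →
      (∏ j ∈ Finset.Icc (a+1) b, M j) * (∏ j ∈ Finset.Icc (b+1) c, M j)
        = ∏ j ∈ Finset.Icc (a+1) c, M j := by
    intro a b c hab hbc
    rw [Finset.Icc_add_one_left_eq_Ioc, Finset.Icc_add_one_left_eq_Ioc, Finset.Icc_add_one_left_eq_Ioc]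
    exact Finset.prod_Ioc_consecutive _ hab hbc
  set Mp : PowerSeries ℚ := ∏ j ∈ Finset.Icc 1 (q+2), M j with hMpdef
  set A : PowerSeries ℚ := 1 - X^3 * Mp with hAdef
  -- step 1a
  have key1 : ∀ i, 1 ≤ i → i ≤ q + 2 →
      M i * A = 1 + (X - X^3) * ∏ j ∈ Finset.Icc i (q+2), M j := by
    intro i h1 h2
    have h := hM i h1 h2
    obtain ⟨i', rfl⟩ : ∃ i', i = i' + 1 := ⟨i - 1, by omega⟩
    have hsplit : (∏ j ∈ Finset.Icc 1 (i'+1), M j)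
        = (∏ j ∈ Finset.Icc 1 i', M j) * M (i'+1) :=
      Finset.prod_Icc_succ_top (by omega) _
    have hsplit2 : (∏ j ∈ Finset.Icc 1 i', M j) * (∏ j ∈ Finset.Icc (i'+1) (q+2), M j) = Mp := by
      simpa using prodsplit 0 i' (q+2) (by omega) (by omega)
    rw [hsplit] at h
    linear_combination h + X^3 * M (i'+1) * hsplit2 + M (i'+1) * hAdef
  -- step 1b
  have key2 : ∀ k, k ≤ q + 2 →
      (∏ j ∈ Finset.Icc (q + 3 - k) (q+2), M j) *
        (A^k - (X - X^3) * ∑ j ∈ Finset.range k, A^j) = 1 := by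
    intro k
    induction k with
    | zero => intro _; rw [Finset.Icc_eq_empty (by omega)]; simp
    | succ k ih =>
      intro hk
      have ih' := ih (by omega)
      rw [show q + 3 - k = q + 1 - k + 1 + 1 from by omega] at ih'
      rw [show q + 3 - (k+1) = q + 1 - k + 1 from by omega]
      have hNsplit : (∏ j ∈ Finset.Icc (q+1-k+1) (q+2), M j)
          = M (q+1-k+1) * ∏ j ∈ Finset.Icc (q+1-k+1+1) (q+2), M j := by
        rw [← prodsplit (q+1-k) (q+1-k+1) (q+2) (by omega) (by omega), Finset.Icc_self,
          Finset.prod_singleton]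
      have hgeom : ∑ j ∈ Finset.range (k+1), A^j = A * ∑ j ∈ Finset.range k, A^j + 1 :=
        geom_sum_succ
      have k1 := key1 (q+1-k+1) (by omega) (by omega)
      rw [hNsplit] at k1
      rw [hgeom, hNsplit]
      linear_combination (M (q+1-k+1) * A) * ih' + k1
  -- step 1c
  have keyM : Mp * (A^(q+2) - (X - X^3) * ∑ j ∈ Finset.range (q+2), A^j) = 1 := by
    have := key2 (q+2) (le_refl _)
    rwa [show q + 3 - (q+2) = 1 from by omega] at this
  have hgs : (∑ j ∈ Finset.range (q+2), A^j) * (A - 1) = A^(q+2) - 1 := geom_sum_mul A (q+2)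
  have hXM : X^3 * Mp = 1 - A := by linear_combination -hAdef
  have keyA : A^(q+3) + X = (1 + X - X^3) * A^(q+2) := by
    linear_combination -X^3*keyM +
      (A^(q+2) - (X - X^3) * ∑ j ∈ Finset.range (q+2), A^j) * hXM + (X - X^3) * hgs
  have hconst : ∀ i, 1 ≤ i → i ≤ q + 2 → constantCoeff (R := ℚ) (M i) = 1 := by
    intro i h1 h2
    have h := congrArg (constantCoeff (R := ℚ)) (hM i h1 h2)
    simp only [map_sub, map_add, map_mul, map_pow, constantCoeff_X, map_one, zero_pow,
      zero_mul, mul_zero, add_zero, ne_eq, OfNat.ofNat_ne_zero, not_false_eq_true] at h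
    linarith [h]
  have hMpc : constantCoeff (R := ℚ) Mp = 1 := by
    rw [hMpdef, map_prod]
    exact Finset.prod_eq_one fun i hi => by
      rw [Finset.mem_Icc] at hi; exact hconst i hi.1 hi.2
  have hMpne : Mp ≠ 0 := fun h => by simp [h] at hMpc
  have hPm : (∏ j ∈ Finset.Icc 1 (q+1), M j) * M (q+2) = Mp :=
    (Finset.prod_Icc_succ_top (by omega) _).symm
  have hL' : L * (1 - X * Mp) = 1 := by linear_combination hL
  have hR' : R * (1 - X^2 * Mp) = M (q+2) * (1 - X^2) := by linear_combination hR
  have hS' : S * ((1 - X * Mp) * (1 - X^2 * Mp)) = Mp * (1 - X^2) := by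
    have h1 : S * ((1 - X*Mp) * (1 - X^2*Mp))
        = (L*(1-X*Mp)) * (∏ j ∈ Finset.Icc 1 (q+1), M j) * (R*(1-X^2*Mp)) := by
      rw [hS]; ring
    rw [hL', hR'] at h1
    rw [h1]
    linear_combination (1 - X^2) * hPm
  have hquad : (P : PowerSeries ℚ) * (1 - (X + X^2) * Mp + X^3 * Mp^2)
      = (1 - X^2) * (Q : PowerSeries ℚ) * Mp := by
    linear_combination -((1 - X*Mp) * (1 - X^2*Mp)) * hPQ + (Q : PowerSeries ℚ) * hS'
  have hPne : (P : PowerSeries ℚ) ≠ 0 := by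
    intro h
    rw [h, zero_mul] at hquad
    have h2 : (1 - X^2 : PowerSeries ℚ) ≠ 0 := fun h => by
      have := congrArg (constantCoeff (R := ℚ)) h; simp at this
    have := mul_ne_zero (mul_ne_zero h2 ((Polynomial.coe_eq_zero_iff).not.mpr hQ)) hMpne
    exact this hquad.symm
  have hP0 : P ≠ 0 := fun h => hPne (by rw [h]; simp)
  have hAne : A ≠ 0 := by
    intro h
    have hc : constantCoeff (R := ℚ) A = 1 := by
      rw [hAdef]; simp [hMpc]
    rw [h] at hc
    simp at hc
  classical
  set ι : PowerSeries ℚ →+* LaurentSeries ℚ := (HahnSeries.ofPowerSeries ℤ ℚ) with hιdef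
  have hιinj : Function.Injective ι := HahnSeries.ofPowerSeries_injective
  -- casting polynomials
  have hcast : ∀ c : Polynomial ℚ,
      algebraMap (Polynomial ℚ) (LaurentSeries ℚ) c = ι ((c : PowerSeries ℚ)) := by
    intro c
    rw [IsScalarTower.algebraMap_apply (Polynomial ℚ) (RatFunc ℚ) (LaurentSeries ℚ)]
    exact (RatFunc.coe_coe c).symm
  set t : LaurentSeries ℚ := ι X with htdef
  set a : LaurentSeries ℚ := ι A with hadef
  set m : LaurentSeries ℚ := ι Mp with hmdef
  have hane : a ≠ 0 := fun h => hAne (hιinj (by simpa using h))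
  have htne : t ≠ 0 := fun h => X_ne_zero (hιinj (by simpa using h))
  set E : LaurentSeries ℚ := t * a⁻¹ with hEdef
  have hEa : E * a = t := by rw [hEdef]; field_simp
  have haM : a = 1 - t^3 * m := by
    rw [hadef, hAdef, htdef, hmdef]; push_cast [map_sub, map_mul, map_pow, map_one]; ring
  have keyAK : a^(q+3) + t = (1 + t - t^3) * a^(q+2) := by
    have h := congrArg ι keyA
    simpa only [map_add, map_mul, map_sub, map_pow, map_one] using h
  have hEt : E - t = t^3 * m * E := by linear_combination hEa - E * haM
  have hquadK : (ι P) * (1 - (t + t^2) * m + t^3 * m^2) = (1 - t^2) * (ι Q) * m := by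
    have h := congrArg ι hquad
    simpa only [map_add, map_mul, map_sub, map_pow, map_one] using h
  have hquadK2 : ι ↑P + (-((t+t^2) * ι ↑P + (1-t^2) * ι ↑Q)) * m + t^3 * ι ↑P * m^2 = 0 := by
    linear_combination hquadK
  clear_value t a m E
  -- the degree-p polynomial
  set H : Polynomial (Polynomial ℚ) :=
    Polynomial.X^(q+3)
      - Polynomial.C ((1 + Polynomial.X - Polynomial.X^3) * Polynomial.X^(q+1)) * Polynomial.X
      + Polynomial.C (Polynomial.X^(q+2)) with hHdef
  have Hmonic : H.Monic := by
    rw [hHdef]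
    monicity!
    exact fun h => absurd h (by omega)
  have Hdeg : H.natDegree = q + 3 := by
    rw [hHdef]
    compute_degree!
    rw [if_neg (by omega : ¬(q+3=1))]
    simp
  have Hmap : H.map (Polynomial.evalRingHom (1:ℚ))
      = Polynomial.X ^ (q+3) - Polynomial.X + 1 := by
    rw [hHdef]
    simp [Polynomial.map_sub, Polynomial.map_add, Polynomial.map_pow, Polynomial.map_mul]
  have HirrZ : Irreducible H :=
    Hmonic.irreducible_of_irreducible_map (Polynomial.evalRingHom (1:ℚ)) H (by rwa [Hmap])
  have Hirr' : Irreducible (H.map (algebraMap (Polynomial ℚ) (RatFunc ℚ))) :=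
    (Polynomial.Monic.irreducible_iff_irreducible_map_fraction_map Hmonic).mp HirrZ
  have hHE : Polynomial.aeval E (H.map (algebraMap (Polynomial ℚ) (RatFunc ℚ))) = 0 := by
    rw [Polynomial.aeval_map_algebraMap, Polynomial.aeval_def, hHdef]
    simp only [Polynomial.eval₂_add, Polynomial.eval₂_sub, Polynomial.eval₂_mul,
      Polynomial.eval₂_pow, Polynomial.eval₂_X, Polynomial.eval₂_C, hcast, map_mul, map_add,
      map_sub, map_pow, map_one, Polynomial.coe_X, Polynomial.coe_one, Polynomial.eval₂_one, ← htdef]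
    have hEpow : ∀ n : ℕ, E^n * a^n = t^n := fun n => by rw [← mul_pow, hEa]
    have h2 : (E^(q+3) - (1 + t - t^3) * t^(q+1) * E + t^(q+2)) * a^(q+3) = 0 := by
      linear_combination hEpow (q+3) - (1+t-t^3)*t^(q+1)*a^(q+2)*hEa + t^(q+2)*keyAK
    rcases mul_eq_zero.mp h2 with h3 | h3
    · linear_combination h3
    · exact absurd h3 (pow_ne_zero _ hane)
  have hminE : minpoly (RatFunc ℚ) E = H.map (algebraMap (Polynomial ℚ) (RatFunc ℚ)) :=
    (minpoly.eq_of_irreducible_of_monic Hirr' hHE (Hmonic.map _)).symm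
  -- the quadratic polynomial killing E
  set r : Polynomial (Polynomial ℚ) :=
    Polynomial.C (Polynomial.X^3 * P
        + (-((Polynomial.X + Polynomial.X^2) * P + (1 - Polynomial.X^2) * Q)) * Polynomial.X^3
        + P * Polynomial.X^6) * Polynomial.X^2
    + Polynomial.C (-(2*Polynomial.X^4*P)
        - (-((Polynomial.X + Polynomial.X^2) * P + (1 - Polynomial.X^2) * Q)) * Polynomial.X^4)
        * Polynomial.X
    + Polynomial.C (Polynomial.X^5 * P) with hrdef
  have hrc0 : r.coeff 0 = Polynomial.X^5 * P := by
    simp [hrdef, ← map_pow]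
  have hrne : r ≠ 0 := fun h => by
    have h5 : (Polynomial.X^5 * P : Polynomial ℚ) = 0 := by rw [← hrc0, h]; simp
    rcases mul_eq_zero.mp h5 with h' | h'
    · exact Polynomial.X_ne_zero (pow_eq_zero_iff (by omega) |>.mp h')
    · exact hP0 h'
  have rdeg : r.degree ≤ 2 := by
    rw [hrdef]
    compute_degree
  have hrE : Polynomial.aeval E (r.map (algebraMap (Polynomial ℚ) (RatFunc ℚ))) = 0 := by
    rw [Polynomial.aeval_map_algebraMap, Polynomial.aeval_def, hrdef]
    simp only [Polynomial.eval₂_add, Polynomial.eval₂_sub, Polynomial.eval₂_mul,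
      Polynomial.eval₂_pow, Polynomial.eval₂_X, Polynomial.eval₂_C, Polynomial.eval₂_one, Polynomial.eval₂_neg, hcast,
      map_mul, map_add, map_sub, map_pow, map_one, map_neg, map_ofNat,
      Polynomial.coe_add, Polynomial.coe_mul, Polynomial.coe_pow, Polynomial.coe_X,
      Polynomial.coe_one, Polynomial.coe_sub, Polynomial.coe_neg, Polynomial.eval₂_ofNat, ← htdef]
    linear_combination (t^3 * ι ↑P * ((E-t) + t^3*m*E)
        + (-((t+t^2) * ι ↑P + (1-t^2) * ι ↑Q)) * t^3 * E) * hEt + t^6*E^2 * hquadK2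
  have hrne' : r.map (algebraMap (Polynomial ℚ) (RatFunc ℚ)) ≠ 0 := by
    rw [Ne, Polynomial.map_eq_zero_iff (IsFractionRing.injective _ _)]
    exact hrne
  have hle := minpoly.degree_le_of_ne_zero (RatFunc ℚ) E hrne' hrE
  have hdegH : (H.map (algebraMap (Polynomial ℚ) (RatFunc ℚ))).degree = ((q+3 : ℕ) : WithBot ℕ) := by
    rw [Hmonic.degree_map, Polynomial.degree_eq_natDegree Hmonic.ne_zero, Hdeg]
  rw [hminE, hdegH] at hle
  have hfin : ((q+3:ℕ) : WithBot ℕ) ≤ 2 := hle.trans (le_trans Polynomial.degree_map_le rdeg)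
  have : (q+3:ℕ) ≤ 2 := by exact_mod_cast hfin
  omega
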